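/- Let χ : ZMod 3 → ℂ with Σ_k |χ_k|² = 1, let {|a_k⟩}, {|b_k⟩} be orthonormal bases of ℂ³, and set |ψ'_m⟩ = Σ_k χ_{k−m} |η_k⟩ where |η_k⟩ = (1/√3) Σ_j |a_j⟩ ⊗ |b_{k−j}⟩. Then Tr_A(|ψ'_m⟩⟨ψ'_m|) is the same operator for all m ∈ ZMod 3, and likewise Tr_B(|ψ'_m⟩⟨ψ'_m|) is independent of m. -/

import Mathlib

open scoped BigOperators
open Matrix

/-- Orthonormal basis condition for a family of three vectors of `ℂ³`. -/
def IsONB3 (a : ZMod 3 → ZMod 3 → ℂ) : Prop :=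
  ∀ j k, star (a j) ⬝ᵥ a k = if j = k then 1 else 0

/-- Tensor product of vectors of `ℂ³`. -/
def tensV (v w : ZMod 3 → ℂ) : ZMod 3 × ZMod 3 → ℂ := fun p => v p.1 * w p.2

/-- `|η_k⟩ = (1/√3) Σ_j |a_j⟩ ⊗ |b_{k−j}⟩`. -/
noncomputable def eta3 (a b : ZMod 3 → ZMod 3 → ℂ) (k : ZMod 3) : ZMod 3 × ZMod 3 → ℂ :=
  ((Real.sqrt 3 : ℂ))⁻¹ • ∑ j : ZMod 3, tensV (a j) (b (k - j))

/-- `|ψ'_m⟩ = Σ_k χ_{k−m} |η_k⟩`. -/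
noncomputable def psi' (χ : ZMod 3 → ℂ) (a b : ZMod 3 → ZMod 3 → ℂ) (m : ZMod 3) :
    ZMod 3 × ZMod 3 → ℂ :=
  ∑ k : ZMod 3, χ (k - m) • eta3 a b k

/-- Partial trace over the first tensor factor. -/
noncomputable def ptrA (M : Matrix (ZMod 3 × ZMod 3) (ZMod 3 × ZMod 3) ℂ) :
    Matrix (ZMod 3) (ZMod 3) ℂ :=
  Matrix.of fun j j' => ∑ i : ZMod 3, M (i, j) (i, j')

/-- Partial trace over the second tensor factor. -/
noncomputable def ptrB (M : Matrix (ZMod 3 × ZMod 3) (ZMod 3 × ZMod 3) ℂ) :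
    Matrix (ZMod 3) (ZMod 3) ℂ :=
  Matrix.of fun i i' => ∑ j : ZMod 3, M (i, j) (i', j)

/- ### Auxiliary machinery -/

noncomputable def gv (χ : ZMod 3 → ℂ) (b : ZMod 3 → ZMod 3 → ℂ) (l j : ZMod 3) : ℂ :=
  ∑ k : ZMod 3, χ (k + l) * b k j

/-- The reindexing equivalence `(l,k) ↦ (k+l+m, l+m)`. -/
def eAux (m : ZMod 3) : (ZMod 3 × ZMod 3) ≃ (ZMod 3 × ZMod 3) where
  toFun q := (q.2 + q.1 + m, q.1 + m)
  invFun q := (q.2 - m, q.1 - q.2)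
  left_inv q := by ext <;> simp
  right_inv q := by ext <;> simp

lemma psi'_apply (χ : ZMod 3 → ℂ) (a b : ZMod 3 → ZMod 3 → ℂ) (m : ZMod 3)
    (p : ZMod 3 × ZMod 3) :
    psi' χ a b m p
      = ((Real.sqrt 3 : ℂ))⁻¹ * ∑ l : ZMod 3, a (l + m) p.1 * gv χ b l p.2 := by
  have h1 : psi' χ a b m p
      = ∑ q : ZMod 3 × ZMod 3,
          χ (q.1 - m) * (((Real.sqrt 3 : ℂ))⁻¹ * (a q.2 p.1 * b (q.1 - q.2) p.2)) := by
    rw [Fintype.sum_prod_type]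
    simp only [psi', eta3, Finset.sum_apply, Pi.smul_apply, tensV, smul_eq_mul,
      Finset.mul_sum]
  have h2 : ((Real.sqrt 3 : ℂ))⁻¹ * ∑ l : ZMod 3, a (l + m) p.1 * gv χ b l p.2
      = ∑ q : ZMod 3 × ZMod 3,
          ((Real.sqrt 3 : ℂ))⁻¹ * (a (q.1 + m) p.1 * (χ (q.2 + q.1) * b q.2 p.2)) := by
    rw [Fintype.sum_prod_type]
    simp only [gv, Finset.mul_sum]
  rw [h1, h2]
  refine (Fintype.sum_equiv (eAux m) _ _ fun q => ?_).symm
  have e1 : q.2 + q.1 + m - m = q.2 + q.1 := by ring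
  have e2 : q.2 + q.1 + m - (q.1 + m) = q.2 := by ring
  simp only [eAux, Equiv.coe_fn_mk, e1, e2]
  ring

lemma sum_conj_mul_delta (a : ZMod 3 → ZMod 3 → ℂ) (ha : IsONB3 a) (l l' : ZMod 3) :
    ∑ i : ZMod 3, a l i * (starRingEnd ℂ) (a l' i) = if l = l' then 1 else 0 := by
  have h := ha l l'
  simp only [dotProduct, Pi.star_apply, RCLike.star_def] at h
  have h2 : ∑ i : ZMod 3, a l i * (starRingEnd ℂ) (a l' i)
      = (starRingEnd ℂ) (∑ i : ZMod 3, (starRingEnd ℂ) (a l i) * a l' i) := by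
    rw [map_sum]
    exact Finset.sum_congr rfl fun i _ => by
      rw [RingHom.map_mul, Complex.conj_conj]
  rw [h2, h]
  simp [apply_ite]


lemma sum_mul_conj_expand (f g : ZMod 3 → ℂ) (F G : ZMod 3 → ZMod 3 → ℂ) :
    ∑ x : ZMod 3, (∑ k : ZMod 3, f k * F k x) * (starRingEnd ℂ) (∑ k : ZMod 3, g k * G k x)
      = ∑ k : ZMod 3, ∑ k' : ZMod 3,
          (f k * (starRingEnd ℂ) (g k')) * ∑ x : ZMod 3, F k x * (starRingEnd ℂ) (G k' x) := by
  have h1 : ∀ x : ZMod 3,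
      (∑ k : ZMod 3, f k * F k x) * (starRingEnd ℂ) (∑ k : ZMod 3, g k * G k x)
        = ∑ k : ZMod 3, ∑ k' : ZMod 3,
            (f k * (starRingEnd ℂ) (g k')) * (F k x * (starRingEnd ℂ) (G k' x)) := by
    intro x
    rw [map_sum, Finset.sum_mul_sum]
    exact Finset.sum_congr rfl fun k _ => Finset.sum_congr rfl fun k' _ => by
      rw [RingHom.map_mul]; ring
  simp only [h1]
  rw [Finset.sum_comm]
  refine Finset.sum_congr rfl fun k _ => ?_
  rw [Finset.sum_comm]
  refine Finset.sum_congr rfl fun k' _ => ?_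
  rw [Finset.mul_sum]

lemma sum_mul_conj_onb (v : ZMod 3 → ZMod 3 → ℂ) (hv : IsONB3 v) (f g : ZMod 3 → ℂ) :
    ∑ x : ZMod 3, (∑ k : ZMod 3, f k * v k x) * (starRingEnd ℂ) (∑ k : ZMod 3, g k * v k x)
      = ∑ k : ZMod 3, f k * (starRingEnd ℂ) (g k) := by
  rw [sum_mul_conj_expand]
  have hδ : ∀ k k' : ZMod 3, ∑ x : ZMod 3, v k x * (starRingEnd ℂ) (v k' x)
      = if k = k' then 1 else 0 := sum_conj_mul_delta v hv
  simp only [hδ, mul_ite, mul_one, mul_zero, Finset.sum_ite_eq, Finset.mem_univ, if_true]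

lemma IsONB3.shift {a : ZMod 3 → ZMod 3 → ℂ} (ha : IsONB3 a) (m : ZMod 3) :
    IsONB3 (fun l => a (l + m)) := by
  intro j k
  rw [ha (j + m) (k + m)]
  simp

noncomputable def Hfun (χ : ZMod 3 → ℂ) (l l' : ZMod 3) : ℂ :=
  ∑ k : ZMod 3, χ (k + l) * (starRingEnd ℂ) (χ (k + l'))

lemma Hfun_shift (χ : ZMod 3 → ℂ) (m l l' : ZMod 3) :
    Hfun χ (l + m) (l' + m) = Hfun χ l l' := by
  unfold Hfun
  rw [← Equiv.sum_comp (Equiv.addRight m)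
    (fun k => χ (k + l) * (starRingEnd ℂ) (χ (k + l')))]
  refine Finset.sum_congr rfl fun k _ => ?_
  simp only [Equiv.coe_addRight]
  ring_nf

lemma hc3 : ((Real.sqrt 3 : ℂ))⁻¹ * (starRingEnd ℂ) ((Real.sqrt 3 : ℂ))⁻¹ = (3 : ℂ)⁻¹ := by
  rw [map_inv₀, Complex.conj_ofReal, ← mul_inv, ← Complex.ofReal_mul,
    Real.mul_self_sqrt (by norm_num)]
  norm_num

lemma entryA (χ : ZMod 3 → ℂ) (a b : ZMod 3 → ZMod 3 → ℂ) (ha : IsONB3 a) (m j j' : ZMod 3) :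
    ∑ i : ZMod 3, psi' χ a b m (i, j) * (starRingEnd ℂ) (psi' χ a b m (i, j'))
      = (3 : ℂ)⁻¹ * ∑ l : ZMod 3, gv χ b l j * (starRingEnd ℂ) (gv χ b l j') := by
  have h2 : ∑ i : ZMod 3, psi' χ a b m (i, j) * (starRingEnd ℂ) (psi' χ a b m (i, j'))
      = (((Real.sqrt 3 : ℂ))⁻¹ * (starRingEnd ℂ) ((Real.sqrt 3 : ℂ))⁻¹)
          * ∑ i : ZMod 3, (∑ l : ZMod 3, gv χ b l j * a (l + m) i)
              * (starRingEnd ℂ) (∑ l : ZMod 3, gv χ b l j' * a (l + m) i) := by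
    rw [Finset.mul_sum]
    refine Finset.sum_congr rfl fun i _ => ?_
    have e1 := psi'_apply χ a b m (i, j)
    have e2 := psi'_apply χ a b m (i, j')
    rw [e1, e2, RingHom.map_mul]
    have e3 : (∑ l : ZMod 3, a (l + m) (i, j).1 * gv χ b l (i, j).2)
        = ∑ l : ZMod 3, gv χ b l j * a (l + m) i :=
      Finset.sum_congr rfl fun l _ => mul_comm _ _
    have e4 : (∑ l : ZMod 3, a (l + m) (i, j').1 * gv χ b l (i, j').2)
        = ∑ l : ZMod 3, gv χ b l j' * a (l + m) i :=
      Finset.sum_congr rfl fun l _ => mul_comm _ _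
    rw [e3, e4]
    ring
  rw [h2, hc3]
  congr 1
  exact sum_mul_conj_onb (fun l => a (l + m)) (ha.shift m) _ _

lemma gv_inner (χ : ZMod 3 → ℂ) (b : ZMod 3 → ZMod 3 → ℂ) (hb : IsONB3 b) (l l' : ZMod 3) :
    ∑ j : ZMod 3, gv χ b l j * (starRingEnd ℂ) (gv χ b l' j) = Hfun χ l l' :=
  sum_mul_conj_onb b hb (fun k => χ (k + l)) (fun k => χ (k + l'))

lemma entryB (χ : ZMod 3 → ℂ) (a b : ZMod 3 → ZMod 3 → ℂ) (hb : IsONB3 b) (m i i' : ZMod 3) :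
    ∑ j : ZMod 3, psi' χ a b m (i, j) * (starRingEnd ℂ) (psi' χ a b m (i', j))
      = (3 : ℂ)⁻¹ * ∑ l : ZMod 3, ∑ l' : ZMod 3,
          (a l i * (starRingEnd ℂ) (a l' i')) * Hfun χ l l' := by
  have h2 : ∑ j : ZMod 3, psi' χ a b m (i, j) * (starRingEnd ℂ) (psi' χ a b m (i', j))
      = (((Real.sqrt 3 : ℂ))⁻¹ * (starRingEnd ℂ) ((Real.sqrt 3 : ℂ))⁻¹)
          * ∑ j : ZMod 3, (∑ l : ZMod 3, a (l + m) i * gv χ b l j)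
              * (starRingEnd ℂ) (∑ l : ZMod 3, a (l + m) i' * gv χ b l j) := by
    rw [Finset.mul_sum]
    refine Finset.sum_congr rfl fun j _ => ?_
    rw [psi'_apply χ a b m (i, j), psi'_apply χ a b m (i', j), RingHom.map_mul]
    ring
  rw [h2, hc3]
  congr 1
  rw [sum_mul_conj_expand (fun l => a (l + m) i) (fun l => a (l + m) i') (gv χ b) (gv χ b)]
  simp only [gv_inner χ b hb]
  conv_rhs => rw [← Equiv.sum_comp (Equiv.addRight m)
      (fun l => ∑ l' : ZMod 3, (a l i * (starRingEnd ℂ) (a l' i')) * Hfun χ l l')]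
  refine Finset.sum_congr rfl fun l _ => ?_
  simp only [Equiv.coe_addRight]
  conv_rhs => rw [← Equiv.sum_comp (Equiv.addRight m)
      (fun l' => (a (l + m) i * (starRingEnd ℂ) (a l' i')) * Hfun χ (l + m) l')]
  refine Finset.sum_congr rfl fun l' _ => ?_
  simp only [Equiv.coe_addRight]
  rw [Hfun_shift]

theorem ptr_psi'_independent (χ : ZMod 3 → ℂ) (hχ : ∑ k : ZMod 3, ‖χ k‖ ^ 2 = 1)
    (a b : ZMod 3 → ZMod 3 → ℂ) (ha : IsONB3 a) (hb : IsONB3 b) :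
    (∀ m m' : ZMod 3,
        ptrA (Matrix.vecMulVec (psi' χ a b m) (star (psi' χ a b m)))
          = ptrA (Matrix.vecMulVec (psi' χ a b m') (star (psi' χ a b m')))) ∧
    (∀ m m' : ZMod 3,
        ptrB (Matrix.vecMulVec (psi' χ a b m) (star (psi' χ a b m)))
          = ptrB (Matrix.vecMulVec (psi' χ a b m') (star (psi' χ a b m')))) := by
  have keyA : ∀ m j j' : ZMod 3,
      ptrA (Matrix.vecMulVec (psi' χ a b m) (star (psi' χ a b m))) j j'
        = (3 : ℂ)⁻¹ * ∑ l : ZMod 3, gv χ b l j * (starRingEnd ℂ) (gv χ b l j') := by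
    intro m j j'
    simp only [ptrA, Matrix.of_apply, Matrix.vecMulVec_apply, Pi.star_apply, RCLike.star_def]
    exact entryA χ a b ha m j j'
  have keyB : ∀ m i i' : ZMod 3,
      ptrB (Matrix.vecMulVec (psi' χ a b m) (star (psi' χ a b m))) i i'
        = (3 : ℂ)⁻¹ * ∑ l : ZMod 3, ∑ l' : ZMod 3,
            (a l i * (starRingEnd ℂ) (a l' i')) * Hfun χ l l' := by
    intro m i i'
    simp only [ptrB, Matrix.of_apply, Matrix.vecMulVec_apply, Pi.star_apply, RCLike.star_def]
    exact entryB χ a b hb m i i'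
  constructor
  · intro m m'
    ext j j'
    rw [keyA, keyA]
  · intro m m'
    ext i i'
    rw [keyB, keyB]
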